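/- Let K₁ ∈ ℝ, L₁ ∈ ℝ \ {0}, and let (r₁, r₂) ∈ [0,1]² with (r₁, r₂) ≠ (0,0). If r₁ ≥ (K₁·r₁ + L₁·r₂)/2, then h₁(r₁, r₂) < 0, i.e., V(K₁·r₁ + L₁·r₂) < r₁. -/

import Mathlib

open Real Set

section helpers
open intervalIntegral MeasureTheory


private lemma D_pos (x : ℝ) : 0 < ∫ θ in (0:ℝ)..2*π, Real.exp (x * Real.cos θ) :=
  intervalIntegral_pos_of_pos_on
    ((by fun_prop : Continuous fun θ : ℝ => Real.exp (x * Real.cos θ)).intervalIntegrable _ _)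
    (fun θ _ => Real.exp_pos _) (by linarith [Real.pi_pos])

private lemma parts (x : ℝ) : (∫ θ in (0:ℝ)..2*π, Real.cos θ * Real.exp (x * Real.cos θ))
    = x * ∫ θ in (0:ℝ)..2*π, Real.sin θ ^ 2 * Real.exp (x * Real.cos θ) := by
  have hderiv : ∀ θ ∈ uIcc (0:ℝ) (2*π),
      HasDerivAt (fun θ => Real.sin θ * Real.exp (x * Real.cos θ))
        (Real.cos θ * Real.exp (x * Real.cos θ) - x * (Real.sin θ ^ 2 * Real.exp (x * Real.cos θ))) θ := by
    intro θ _
    have h2 : HasDerivAt (fun θ : ℝ => Real.exp (x * Real.cos θ))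
        (Real.exp (x * Real.cos θ) * (x * (-Real.sin θ))) θ :=
      ((Real.hasDerivAt_cos θ).const_mul x).exp
    have := (Real.hasDerivAt_sin θ).mul h2
    refine this.congr_deriv ?_; ring
  have h0 : (∫ θ in (0:ℝ)..2*π, (Real.cos θ * Real.exp (x * Real.cos θ) -
      x * (Real.sin θ ^ 2 * Real.exp (x * Real.cos θ)))) = 0 := by
    rw [integral_eq_sub_of_hasDerivAt hderiv
      ((by fun_prop : Continuous fun θ : ℝ => Real.cos θ * Real.exp (x * Real.cos θ) -
        x * (Real.sin θ ^ 2 * Real.exp (x * Real.cos θ))).intervalIntegrable _ _)]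
    simp [Real.sin_two_pi]
  rw [integral_sub ((by fun_prop : Continuous fun θ : ℝ => Real.cos θ * Real.exp (x * Real.cos θ)).intervalIntegrable _ _)
    ((by fun_prop : Continuous fun θ : ℝ => x * (Real.sin θ ^ 2 * Real.exp (x * Real.cos θ))).intervalIntegrable _ _),
    intervalIntegral.integral_const_mul] at h0
  linarith

private lemma S_pos (x : ℝ) : 0 < ∫ θ in (0:ℝ)..2*π, Real.sin θ ^ 2 * Real.exp (x * Real.cos θ) := by
  have hc : Continuous fun θ : ℝ => Real.sin θ ^ 2 * Real.exp (x * Real.cos θ) := by fun_prop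
  have hsplit : (∫ θ in (0:ℝ)..π/2, Real.sin θ ^ 2 * Real.exp (x * Real.cos θ)) +
      (∫ θ in (π/2:ℝ)..(2*π), Real.sin θ ^ 2 * Real.exp (x * Real.cos θ)) =
      ∫ θ in (0:ℝ)..2*π, Real.sin θ ^ 2 * Real.exp (x * Real.cos θ) :=
    integral_add_adjacent_intervals (hc.intervalIntegrable _ _) (hc.intervalIntegrable _ _)
  rw [← hsplit]
  have h1 : 0 < ∫ θ in (0:ℝ)..π/2, Real.sin θ ^ 2 * Real.exp (x * Real.cos θ) := by
    apply intervalIntegral_pos_of_pos_on (hc.intervalIntegrable _ _) _ (by linarith [Real.pi_pos])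
    intro θ hθ
    have hs : 0 < Real.sin θ := Real.sin_pos_of_pos_of_lt_pi hθ.1 (by nlinarith [Real.pi_pos, hθ.2])
    positivity
  have h2 : 0 ≤ ∫ θ in (π/2)..(2*π), Real.sin θ ^ 2 * Real.exp (x * Real.cos θ) := by
    apply intervalIntegral.integral_nonneg (by linarith [Real.pi_pos])
    intro θ _; positivity
  linarith



private lemma P_pos (x : ℝ) (hx : x ≠ 0) :
    0 < ∫ θ in (0:ℝ)..(2*π), Real.cos (2*θ) * Real.exp (x * Real.cos θ) := by
  set f : ℝ → ℝ := fun θ => Real.cos (2*θ) * Real.exp (x * Real.cos θ) with hf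
  set g : ℝ → ℝ := fun θ => Real.cos (2*θ) * (Real.exp (x * Real.cos θ) + Real.exp (-(x * Real.cos θ))) with hg
  set h : ℝ → ℝ := fun θ => Real.cos (2*θ) *
    (Real.exp (x * Real.cos θ) + Real.exp (-(x * Real.cos θ))
      - Real.exp (x * Real.sin θ) - Real.exp (-(x * Real.sin θ))) with hh
  have cf : Continuous f := by fun_prop
  have cg : Continuous g := by fun_prop
  have ch : Continuous h := by fun_prop
  -- step 1 : ∫_π^{2π} f = ∫_0^π cos2θ exp(-(x cos θ))
  have step1 : (∫ θ in π..(2*π), f θ) =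
      ∫ θ in (0:ℝ)..π, Real.cos (2*θ) * Real.exp (-(x * Real.cos θ)) := by
    have := integral_comp_add_right (a := (0:ℝ)) (b := π) f π
    rw [show π + π = 2*π by ring, show (0:ℝ) + π = π by ring] at this
    rw [← this]
    apply integral_congr
    intro θ _
    simp only [hf]
    rw [show 2*(θ+π) = 2*θ + 2*π by ring, Real.cos_add_two_pi, Real.cos_add_pi, mul_neg]
  -- step 2 : ∫_0^{2π} f = ∫_0^π g
  have step2 : (∫ θ in (0:ℝ)..(2*π), f θ) = ∫ θ in (0:ℝ)..π, g θ := by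
    have hadd : (∫ θ in (0:ℝ)..π, f θ) + (∫ θ in π..(2*π), f θ) = ∫ θ in (0:ℝ)..(2*π), f θ :=
      integral_add_adjacent_intervals (cf.intervalIntegrable _ _) (cf.intervalIntegrable _ _)
    rw [← hadd, step1, ← integral_add (cf.intervalIntegrable _ _)
      ((by fun_prop : Continuous fun θ : ℝ => Real.cos (2*θ) * Real.exp (-(x * Real.cos θ))).intervalIntegrable _ _)]
    apply integral_congr
    intro θ _
    simp only [hf, hg]; ring
  -- step 3 : ∫_{π/2}^π g = ∫_0^{π/2} g
  have step3 : (∫ θ in (π/2)..π, g θ) = ∫ θ in (0:ℝ)..(π/2), g θ := by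
    have := integral_comp_sub_left (a := (0:ℝ)) (b := π/2) g π
    rw [show π - π/2 = π/2 by ring, show π - (0:ℝ) = π by ring] at this
    rw [← this]
    apply integral_congr
    intro θ _
    simp only [hg]
    rw [show 2*(π-θ) = 2*π - 2*θ by ring, Real.cos_two_pi_sub, Real.cos_pi_sub, mul_neg, neg_neg]
    ring
  -- step 4 : ∫_0^{2π} f = 2 * ∫_0^{π/2} g
  have step4 : (∫ θ in (0:ℝ)..(2*π), f θ) = 2 * ∫ θ in (0:ℝ)..(π/2), g θ := by
    have hadd : (∫ θ in (0:ℝ)..(π/2), g θ) + (∫ θ in (π/2)..π, g θ) = ∫ θ in (0:ℝ)..π, g θ :=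
      integral_add_adjacent_intervals (cg.intervalIntegrable _ _) (cg.intervalIntegrable _ _)
    rw [step2, ← hadd, step3]; ring
  -- step 5 : ∫_{π/4}^{π/2} g = ∫_0^{π/4} (g - h)... i.e. g(π/2-θ)
  have step5 : (∫ θ in (π/4)..(π/2), g θ) =
      ∫ θ in (0:ℝ)..(π/4), -(Real.cos (2*θ)) * (Real.exp (x * Real.sin θ) + Real.exp (-(x * Real.sin θ))) := by
    have := integral_comp_sub_left (a := (0:ℝ)) (b := π/4) g (π/2)
    rw [show π/2 - π/4 = π/4 by ring, show π/2 - (0:ℝ) = π/2 by ring] at this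
    rw [← this]
    apply integral_congr
    intro θ _
    simp only [hg]
    rw [show 2*(π/2-θ) = π - 2*θ by ring, Real.cos_pi_sub, Real.cos_pi_div_two_sub]
  -- step 6 : ∫_0^{π/2} g = ∫_0^{π/4} h
  have step6 : (∫ θ in (0:ℝ)..(π/2), g θ) = ∫ θ in (0:ℝ)..(π/4), h θ := by
    have hadd : (∫ θ in (0:ℝ)..(π/4), g θ) + (∫ θ in (π/4)..(π/2), g θ) = ∫ θ in (0:ℝ)..(π/2), g θ :=
      integral_add_adjacent_intervals (cg.intervalIntegrable _ _) (cg.intervalIntegrable _ _)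
    rw [← hadd, step5, ← integral_add (cg.intervalIntegrable _ _)
      ((by fun_prop : Continuous fun θ : ℝ =>
        -(Real.cos (2*θ)) * (Real.exp (x * Real.sin θ) + Real.exp (-(x * Real.sin θ)))).intervalIntegrable _ _)]
    apply integral_congr
    intro θ _
    simp only [hg, hh]; ring
  -- positivity of ∫_0^{π/4} h
  have hpos : 0 < ∫ θ in (0:ℝ)..(π/4), h θ := by
    apply intervalIntegral_pos_of_pos_on (ch.intervalIntegrable _ _) _ (by linarith [Real.pi_pos])
    intro θ hθ
    obtain ⟨h0, h4⟩ := hθ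
    have hπ := Real.pi_pos
    have hc2 : 0 < Real.cos (2*θ) :=
      Real.cos_pos_of_mem_Ioo ⟨by linarith, by linarith⟩
    have hsc : Real.sin θ < Real.cos θ := by
      rw [← Real.sin_pi_div_two_sub θ]
      exact Real.strictMonoOn_sin ⟨by linarith, by linarith⟩ ⟨by linarith, by linarith⟩
        (by linarith)
    have hsn : 0 ≤ Real.sin θ := Real.sin_nonneg_of_nonneg_of_le_pi h0.le (by linarith)
    have hcosh : Real.cosh (x * Real.sin θ) < Real.cosh (x * Real.cos θ) := by
      rw [Real.cosh_lt_cosh, abs_mul, abs_mul]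
      exact mul_lt_mul_of_pos_left (by rw [abs_of_nonneg hsn, abs_of_pos (by linarith : (0:ℝ) < Real.cos θ)]; exact hsc) (abs_pos.2 hx)
    rw [Real.cosh_eq, Real.cosh_eq] at hcosh
    simp only [hh]
    apply mul_pos hc2
    linarith
  rw [step4, step6]
  linarith


private lemma key_lt (x : ℝ) (hx : x ≠ 0) :
    2 * (∫ θ in (0:ℝ)..2*π, Real.sin θ ^ 2 * Real.exp (x * Real.cos θ)) <
      ∫ θ in (0:ℝ)..2*π, Real.exp (x * Real.cos θ) := by
  have hP := P_pos x hx
  have heq : (∫ θ in (0:ℝ)..(2*π), Real.cos (2*θ) * Real.exp (x * Real.cos θ)) =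
      (∫ θ in (0:ℝ)..2*π, Real.exp (x * Real.cos θ)) -
      2 * (∫ θ in (0:ℝ)..2*π, Real.sin θ ^ 2 * Real.exp (x * Real.cos θ)) := by
    rw [← intervalIntegral.integral_const_mul, ← integral_sub
      ((by fun_prop : Continuous fun θ : ℝ => Real.exp (x * Real.cos θ)).intervalIntegrable _ _)
      ((by fun_prop : Continuous fun θ : ℝ =>
        2 * (Real.sin θ ^ 2 * Real.exp (x * Real.cos θ))).intervalIntegrable _ _)]
    apply integral_congr
    intro θ _
    have : Real.cos (2*θ) = 1 - 2 * Real.sin θ ^ 2 := by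
      rw [Real.cos_two_mul, Real.cos_sq']; ring
    simp only []
    rw [this]; ring
  linarith

end helpers

/-- The function `V(x) = (∫ cos θ e^{x cos θ} dθ) / (∫ e^{x cos θ} dθ)` over `[0, 2π]`. -/
noncomputable def V (x : ℝ) : ℝ :=
  (∫ θ in (0:ℝ)..(2 * π), Real.cos θ * Real.exp (x * Real.cos θ)) /
  (∫ θ in (0:ℝ)..(2 * π), Real.exp (x * Real.cos θ))

theorem h1_neg_of_le (K₁ L₁ r₁ r₂ : ℝ) (hL₁ : L₁ ≠ 0)
    (hr₁ : r₁ ∈ Icc (0:ℝ) 1) (hr₂ : r₂ ∈ Icc (0:ℝ) 1)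
    (hne : (r₁, r₂) ≠ (0, 0))
    (hge : r₁ ≥ (K₁ * r₁ + L₁ * r₂) / 2) :
    V (K₁ * r₁ + L₁ * r₂) < r₁ := by
  obtain ⟨h10, h11⟩ := hr₁
  set x := K₁ * r₁ + L₁ * r₂ with hxdef
  have hD := D_pos x
  have hS := S_pos x
  have hV : V x = x * (∫ θ in (0:ℝ)..2*π, Real.sin θ ^ 2 * Real.exp (x * Real.cos θ)) /
      (∫ θ in (0:ℝ)..2*π, Real.exp (x * Real.cos θ)) := by
    unfold V; rw [parts]
  rcases lt_trichotomy x 0 with hlt | heq | hgt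
  · have : V x < 0 := by
      rw [hV]
      exact div_neg_of_neg_of_pos (mul_neg_of_neg_of_pos hlt hS) hD
    linarith
  · have hr1pos : 0 < r₁ := by
      rcases eq_or_lt_of_le h10 with h | h
      · exfalso
        have hr2 : r₂ ≠ 0 := by
          intro h2
          exact hne (by rw [← h, h2])
        have : L₁ * r₂ = 0 := by
          have : K₁ * r₁ + L₁ * r₂ = 0 := heq
          rw [← h] at this; linarith
        exact (mul_ne_zero hL₁ hr2) this
      · exact h
    rw [hV, heq]
    simpa using hr1pos
  · have hkey := key_lt x (ne_of_gt hgt)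
    rw [hV, div_lt_iff₀ hD]
    nlinarith [mul_pos hgt (by linarith : (0:ℝ) <
        (∫ θ in (0:ℝ)..2*π, Real.exp (x * Real.cos θ)) -
        2 * (∫ θ in (0:ℝ)..2*π, Real.sin θ ^ 2 * Real.exp (x * Real.cos θ))),
      mul_nonneg (by linarith : (0:ℝ) ≤ r₁ - x/2) hD.le]
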